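/- For all integers n ≥ 2 and 0 ≤ i ≤ n−2, let κ_i denote the number of tuples (x_1,…,x_{n−1}, y_2,…,y_{n−1}) of nonnegative integers satisfying x_1 + (y_2 + y_3 + ⋯ + y_{n−1}) = n − 2 − i and x_d + (y_d + y_{d+1} + ⋯ + y_{n−1}) = n − 1 − d for each 2 ≤ d ≤ n−1. Then (n−1) · κ_i = (i+1) · binom(2n − 4 − i, n − 2). -/

import Mathlib

open Finset

/-- recursive count of staircase-bounded antitone sequences -/
def Akap : ℕ → ℕ → ℕ
  | 0, _ => 1
  | m+1, c => ∑ u ∈ Finset.range (min m c + 1), Akap m u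

lemma Akap_succ (m c : ℕ) :
    Akap (m+1) c = ∑ u ∈ Finset.range (min m c + 1), Akap m u := rfl

lemma Akap_zero (m : ℕ) : Akap m 0 = 1 := by
  induction m with
  | zero => rfl
  | succ m ih => simp [Akap_succ, ih]

lemma Akap_succ_succ (m c : ℕ) (h : c + 1 ≤ m) :
    Akap (m+1) (c+1) = Akap (m+1) c + Akap m (c+1) := by
  rw [Akap_succ, Akap_succ, min_eq_right h, min_eq_right (by omega : c ≤ m),
    Finset.sum_range_succ]

lemma Akap_top (m : ℕ) : Akap (m+1) (m+1) = Akap (m+1) m := by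
  rw [Akap_succ, Akap_succ, min_eq_left (by omega), min_self]

lemma Akey : ∀ m, ∀ c ≤ m, (m + 1) * Akap m c = (m + 1 - c) * Nat.choose (m + c) m := by
  intro m
  induction m with
  | zero =>
    intro c hc
    interval_cases c
    simp [Akap]
  | succ m ihm =>
    intro c hc
    induction c with
    | zero => simp [Akap_zero, Nat.choose_self]
    | succ c ihc =>
      have ihc' := ihc (by omega)
      by_cases hlt : c + 1 ≤ m
      · rw [Akap_succ_succ m c hlt]
        have e2 := ihm (c+1) hlt
        obtain ⟨j, rfl⟩ : ∃ j, m = c + j := ⟨m - c, by omega⟩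
        have e3 := Nat.choose_succ_right_eq (c + j + 1 + c) (c + j)
        rw [show c + j + 1 + 1 - c = j + 2 from by omega] at ihc'
        rw [show c + j + 1 - (c + 1) = j from by omega,
          show c + j + (c + 1) = c + j + 1 + c from by omega] at e2
        rw [show c + j + 1 + c - (c + j) = c + 1 from by omega] at e3
        rw [show c + j + 1 + 1 - (c + 1) = j + 1 from by omega]
        have pascal : Nat.choose (c + j + 1 + (c + 1)) (c + j + 1)
            = Nat.choose (c + j + 1 + c) (c + j) + Nat.choose (c + j + 1 + c) (c + j + 1) := by
          rw [show c + j + 1 + (c + 1) = (c + j + 1 + c) + 1 from by omega]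
          exact Nat.choose_succ_succ' (c + j + 1 + c) (c + j)
        rw [pascal]
        set a := Nat.choose (c + j + 1 + c) (c + j) with ha
        set b := Nat.choose (c + j + 1 + c) (c + j + 1) with hb
        set Ac := Akap (c + j + 1) c with hAc
        set Am := Akap (c + j) (c + 1) with hAm
        have goalZ : ((c:ℤ)+j+1) * ((c+j+1+1)*(Ac+Am)) = ((c:ℤ)+j+1)*((j+1)*(a+b)) := by
          have e1' : ((c:ℤ)+j+1+1) * Ac = ((j:ℤ)+2)*b := by exact_mod_cast ihc'
          have e2' : ((c:ℤ)+j+1) * Am = (j:ℤ)*a := by exact_mod_cast e2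
          have e3' : (b:ℤ) * ((c:ℤ)+j+1) = (a:ℤ) * ((c:ℤ)+1) := by exact_mod_cast e3
          linear_combination ((c:ℤ)+j+1)*e1' + ((c:ℤ)+j+2)*e2' + e3'
        have goalN : (c+j+1) * ((c+j+1+1)*(Ac+Am)) = (c+j+1)*((j+1)*(a+b)) := by
          exact_mod_cast goalZ
        exact Nat.eq_of_mul_eq_mul_left (by omega) goalN
      · have hceq : c = m := by omega
        subst hceq
        rw [Akap_top c]
        rw [show c + 1 + 1 - c = 2 from by omega] at ihc'
        rw [show c + 1 + 1 - (c + 1) = 1 from by omega, one_mul]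
        have pas : Nat.choose (c + 1 + (c + 1)) (c + 1)
            = Nat.choose (2*c+1) c + Nat.choose (2*c+1) (c+1) := by
          rw [show c + 1 + (c + 1) = (2*c+1) + 1 from by omega]
          exact Nat.choose_succ_succ' (2*c+1) c
        rw [pas, ← Nat.choose_symm_half c]
        rw [show c + 1 + c = 2*c+1 from by omega] at ihc'
        omega
def Tset (m c : ℕ) : Type :=
  {t : Fin m → ℕ // (∀ k l : Fin m, k ≤ l → t l ≤ t k) ∧
    ∀ k : Fin m, t k ≤ min c (m - 1 - (k : ℕ))}

def Tequiv (m c : ℕ) : Tset (m+1) c ≃ Σ u : Fin (min m c + 1), Tset m (u : ℕ) where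
  toFun t := ⟨⟨t.1 0, by
      have h := t.2.2 0
      have h1 : t.1 0 ≤ c := le_trans h (min_le_left _ _)
      have h2 : t.1 0 ≤ m + 1 - 1 - ((0 : Fin (m+1)) : ℕ) := le_trans h (min_le_right _ _)
      have h3 : ((0 : Fin (m+1)) : ℕ) = 0 := rfl
      rw [h3] at h2
      omega⟩,
    ⟨fun k => t.1 k.succ, by
      constructor
      · intro k l hkl
        exact t.2.1 k.succ l.succ (Fin.succ_le_succ_iff.mpr hkl)
      · intro k
        show t.1 k.succ ≤ min (t.1 0) (m - 1 - (k : ℕ))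
        have h1 := t.2.1 0 k.succ (Fin.zero_le _)
        have h2 : t.1 k.succ ≤ m + 1 - 1 - ((k : ℕ) + 1) :=
          le_trans (t.2.2 k.succ) (min_le_right _ _)
        refine le_min h1 ?_
        omega⟩⟩
  invFun ut := ⟨Fin.cons (ut.1 : ℕ) ut.2.1, by
      obtain ⟨u, t, ht⟩ := ut
      dsimp only
      have hu : (u : ℕ) ≤ min m c := by omega
      constructor
      · intro k l hkl
        induction k using Fin.cases with
        | zero =>
          induction l using Fin.cases with
          | zero => exact le_refl _
          | succ l =>
            rw [Fin.cons_succ, Fin.cons_zero]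
            exact le_trans (le_trans (ht.2 l) (min_le_left _ _)) (le_refl _)
        | succ k =>
          induction l using Fin.cases with
          | zero =>
            exact absurd hkl (by rw [Fin.le_def]; simp [Fin.val_succ])
          | succ l =>
            rw [Fin.cons_succ, Fin.cons_succ]
            exact ht.1 k l (Fin.succ_le_succ_iff.mp hkl)
      · intro k
        induction k using Fin.cases with
        | zero =>
          rw [Fin.cons_zero]
          have h3 : ((0 : Fin (m+1)) : ℕ) = 0 := rfl
          rw [h3]
          refine le_min (le_trans hu (min_le_right _ _)) ?_
          have := le_trans hu (min_le_left _ _)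
          omega
        | succ k =>
          rw [Fin.cons_succ]
          have h := ht.2 k
          have h1 := le_trans h (min_le_left _ _)
          have h2 := le_trans h (min_le_right _ _)
          have hu1 := le_trans hu (min_le_right _ _)
          have hu2 := le_trans hu (min_le_left _ _)
          have hv : (k.succ : ℕ) = (k : ℕ) + 1 := rfl
          rw [hv]
          refine le_min (le_trans h1 hu1) ?_
          omega⟩
  left_inv t := by
    apply Subtype.ext
    exact Fin.cons_self_tail t.1
  right_inv ut := rfl

instance Tset_finite (m c : ℕ) : Finite (Tset m c) := by
  apply Finite.of_injective
    (fun t : Tset m c => fun k : Fin m =>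
      (⟨t.1 k, Nat.lt_succ_of_le (le_trans (t.2.2 k) (min_le_left _ _))⟩ : Fin (c+1)))
  intro a b h
  apply Subtype.ext; funext k
  exact congrArg Fin.val (congrFun h k)

lemma cardT : ∀ m c, Nat.card (Tset m c) = Akap m c := by
  intro m
  induction m with
  | zero =>
    intro c
    have : Unique (Tset 0 c) :=
      { default := ⟨fun k => k.elim0, fun k => k.elim0, fun k => k.elim0⟩
        uniq := by
          rintro ⟨t, ht⟩
          apply Subtype.ext
          funext k
          exact k.elim0 }
    rw [Nat.card_unique]
    rfl
  | succ m ihm =>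
    intro c
    rw [Nat.card_congr (Tequiv m c)]
    classical
    haveI inst : ∀ u : Fin (min m c + 1), Fintype (Tset m (u : ℕ)) :=
      fun u => Fintype.ofFinite _
    rw [Nat.card_eq_fintype_card, Fintype.card_sigma, Akap_succ,
      ← Fin.sum_univ_eq_sum_range (fun u => Akap m u) (min m c + 1)]
    apply Finset.sum_congr rfl
    intro u _
    rw [← Nat.card_eq_fintype_card, ihm]

/-- extension of a `Fin m`-tuple to `ℕ` by zero -/
def Yext (m : ℕ) (y : Fin m → ℕ) : ℕ → ℕ := fun j => if h : j < m then y ⟨j, h⟩ else 0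

/-- tail sums -/
def Sf (m : ℕ) (y : Fin m → ℕ) (k : ℕ) : ℕ :=
  ∑ j ∈ Finset.univ.filter (fun j : Fin m => k ≤ (j : ℕ)), y j

lemma filter_range_eq_Ico (k m : ℕ) :
    (Finset.range m).filter (fun j => k ≤ j) = Finset.Ico k m := by
  ext x
  simp only [Finset.mem_filter, Finset.mem_range, Finset.mem_Ico]
  omega

lemma Sf_eq_Ico (m : ℕ) (y : Fin m → ℕ) (k : ℕ) :
    Sf m y k = ∑ j ∈ Finset.Ico k m, Yext m y j := by
  rw [Sf, Finset.sum_filter, ← filter_range_eq_Ico, Finset.sum_filter,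
    ← Fin.sum_univ_eq_sum_range (fun j => if k ≤ j then Yext m y j else 0) m]
  refine Finset.sum_congr rfl fun j _ => ?_
  by_cases h : k ≤ (j : ℕ) <;> simp [h, Yext, j.2, Fin.eta]

lemma Sf_anti (m : ℕ) (y : Fin m → ℕ) {k l : ℕ} (hkl : k ≤ l) : Sf m y l ≤ Sf m y k := by
  apply Finset.sum_le_sum_of_subset
  apply Finset.monotone_filter_right
  intro j _ hj
  exact le_trans hkl hj

lemma Sf_zero (m : ℕ) (y : Fin m → ℕ) : Sf m y 0 = ∑ j, y j := by
  rw [Sf, Finset.filter_true_of_mem (fun j _ => Nat.zero_le _)]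

lemma Sf_split (m : ℕ) (y : Fin m → ℕ) (k : ℕ) (hk : k < m) :
    Sf m y k = y ⟨k, hk⟩ + Sf m y (k + 1) := by
  rw [Sf_eq_Ico, Sf_eq_Ico, Finset.sum_eq_sum_Ico_succ_bot hk]
  congr 1
  simp [Yext, hk]

lemma Sf_high (m : ℕ) (y : Fin m → ℕ) {k : ℕ} (hk : m ≤ k) : Sf m y k = 0 := by
  rw [Sf_eq_Ico, Finset.Ico_eq_empty (by omega), Finset.sum_empty]

lemma g_mono {g : ℕ → ℕ} (hg : ∀ j, g (j + 1) ≤ g j) {a b : ℕ} (hab : a ≤ b) :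
    g b ≤ g a := by
  induction hab with
  | refl => exact le_refl _
  | step h ih => exact le_trans (hg _) ih

lemma tele {g : ℕ → ℕ} (hg : ∀ j, g (j + 1) ≤ g j) :
    ∀ m k, k ≤ m → ∑ j ∈ Finset.Ico k m, (g j - g (j + 1)) = g k - g m := by
  intro m
  induction m with
  | zero =>
    intro k hk
    obtain rfl : k = 0 := by omega
    simp
  | succ m ih =>
    intro k hk
    by_cases hk' : k = m + 1
    · subst hk'
      simp
    · have hkm : k ≤ m := by omega
      rw [Finset.sum_Ico_succ_top hkm, ih k hkm]
      have h1 := hg m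
      have h2 := g_mono hg hkm
      omega

lemma Sf_of_g (m : ℕ) {g : ℕ → ℕ} (hg : ∀ j, g (j + 1) ≤ g j) (k : ℕ) (hk : k ≤ m) :
    Sf m (fun j : Fin m => g (j : ℕ) - g ((j : ℕ) + 1)) k = g k - g m := by
  rw [Sf_eq_Ico, ← tele hg m k hk]
  refine Finset.sum_congr rfl fun j hj => ?_
  have hjm : j < m := (Finset.mem_Ico.mp hj).2
  simp [Yext, hjm]

/-- zero-extension of an element of Tset -/
def Gg (m : ℕ) (t : Fin m → ℕ) : ℕ → ℕ := fun k => if h : k < m then t ⟨k, h⟩ else 0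

lemma Gg_mono (m c : ℕ) (t : Tset m c) (j : ℕ) :
    Gg m t.1 (j + 1) ≤ Gg m t.1 j := by
  unfold Gg
  by_cases h1 : j + 1 < m
  · rw [dif_pos h1, dif_pos (by omega : j < m)]
    exact t.2.1 _ _ (by simp [Fin.le_def])
  · rw [dif_neg h1]
    exact Nat.zero_le _

lemma Gg_le_c (m c : ℕ) (t : Tset m c) (j : ℕ) : Gg m t.1 j ≤ c := by
  unfold Gg
  by_cases h : j < m
  · rw [dif_pos h]
    exact le_trans (t.2.2 _) (min_le_left _ _)
  · rw [dif_neg h]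
    exact Nat.zero_le _

lemma Gg_le_stair (m c : ℕ) (t : Tset m c) (j : ℕ) (hj : j < m) :
    Gg m t.1 j ≤ m - 1 - j := by
  unfold Gg
  rw [dif_pos hj]
  exact le_trans (t.2.2 _) (min_le_right _ _)

lemma Gg_high (m : ℕ) (t : Fin m → ℕ) {j : ℕ} (hj : m ≤ j) : Gg m t j = 0 := by
  unfold Gg
  rw [dif_neg (by omega)]
lemma card_eq (m c : ℕ) :
    Nat.card {p : (Fin (m + 1) → ℕ) × (Fin m → ℕ) //
      (p.1 ⟨0, by omega⟩ + ∑ j, p.2 j = c) ∧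
      (∀ d : ℕ, ∀ _h1 : 2 ≤ d, ∀ _h2 : d ≤ m + 1,
        p.1 ⟨d - 1, by omega⟩ +
          ∑ j ∈ Finset.univ.filter (fun j : Fin m => d ≤ (j : ℕ) + 2), p.2 j
        = m + 1 - d)} = Nat.card (Tset m c) := by
  apply Nat.card_congr
  -- preliminary: the filtered sum in the statement is a tail sum
  have hfil : ∀ (y : Fin m → ℕ) (d : ℕ), 2 ≤ d →
      ∑ j ∈ Finset.univ.filter (fun j : Fin m => d ≤ (j : ℕ) + 2), y j = Sf m y (d - 2) := by
    intro y d hd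
    rw [Sf]
    congr 1
    apply Finset.filter_congr
    intro j _
    constructor <;> intro h <;> omega
  refine
    { toFun := fun p => ⟨fun k => Sf m p.1.2 (k : ℕ), ?_, ?_⟩
      invFun := fun t =>
        ⟨⟨fun k => if (k : ℕ) = 0 then c - Gg m t.1 0
            else (m - (k : ℕ)) - Gg m t.1 ((k : ℕ) - 1),
          fun j => Gg m t.1 (j : ℕ) - Gg m t.1 ((j : ℕ) + 1)⟩, ?_, ?_⟩
      left_inv := ?_
      right_inv := ?_ }
  · -- antitone
    intro k l hkl
    exact Sf_anti m _ hkl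
  · -- bounds
    intro k
    obtain ⟨p, hp1, hp2⟩ := p
    dsimp only
    refine le_min ?_ ?_
    · have := hp1
      rw [← Sf_zero] at this
      exact le_trans (Sf_anti m _ (Nat.zero_le _)) (by omega)
    · have h := hp2 ((k : ℕ) + 2) (by omega) (by omega)
      rw [hfil p.2 ((k : ℕ) + 2) (by omega)] at h
      have : ((k : ℕ) + 2 - 2) = (k : ℕ) := by omega
      rw [this] at h
      omega
  · -- cond1 for invFun
    have hg0 : Gg m t.1 0 ≤ c := Gg_le_c m c t 0
    show (if (0 : ℕ) = 0 then c - Gg m t.1 0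
        else (m - (0 : ℕ)) - Gg m t.1 ((0 : ℕ) - 1)) +
      (∑ j : Fin m, (Gg m t.1 (j : ℕ) - Gg m t.1 ((j : ℕ) + 1))) = c
    rw [if_pos rfl, ← Sf_zero, Sf_of_g m (Gg_mono m c t) 0 (Nat.zero_le _),
      Gg_high m t.1 (le_refl m)]
    omega
  · -- cond2 for invFun
    intro d hd1 hd2
    have hne : (d - 1 : ℕ) ≠ 0 := by omega
    show (if (d - 1 : ℕ) = 0 then c - Gg m t.1 0
        else (m - (d - 1 : ℕ)) - Gg m t.1 ((d - 1 : ℕ) - 1)) +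
      (∑ j ∈ Finset.univ.filter (fun j : Fin m => d ≤ (j : ℕ) + 2),
        (Gg m t.1 (j : ℕ) - Gg m t.1 ((j : ℕ) + 1))) = m + 1 - d
    rw [if_neg hne, hfil _ d hd1, Sf_of_g m (Gg_mono m c t) (d - 2) (by omega),
      Gg_high m t.1 (le_refl m)]
    have hb : Gg m t.1 (d - 2) ≤ m - 1 - (d - 2) := Gg_le_stair m c t (d - 2) (by omega)
    have : (d - 1 - 1 : ℕ) = d - 2 := by omega
    rw [this]
    omega
  · -- left_inv
    rintro ⟨⟨x, y⟩, hp1, hp2⟩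
    apply Subtype.ext
    dsimp only
    dsimp only at hp1 hp2
    have hgS : ∀ j : ℕ, Gg m (fun k : Fin m => Sf m y (k : ℕ)) j = Sf m y j := by
      intro j
      unfold Gg
      by_cases h : j < m
      · rw [dif_pos h]
      · rw [dif_neg h, Sf_high m y (by omega)]
    refine Prod.ext ?_ ?_
    · funext k
      dsimp only
      rw [hgS, hgS]
      by_cases hk : (k : ℕ) = 0
      · rw [if_pos hk]
        rw [← Sf_zero] at hp1
        have hxk : x ⟨0, by omega⟩ = x k := congrArg x (Fin.ext (show (0:ℕ) = (k:ℕ) by omega))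
        rw [hxk] at hp1
        omega
      · rw [if_neg hk]
        have h := hp2 ((k : ℕ) + 1) (by omega) (by omega)
        rw [hfil y ((k : ℕ) + 1) (by omega)] at h
        have e1 : ((k : ℕ) + 1 - 2) = (k : ℕ) - 1 := by omega
        rw [e1] at h
        have hxk : x ⟨(k : ℕ) + 1 - 1, by omega⟩ = x k := congrArg x (Fin.ext (show ((k:ℕ) + 1 - 1 : ℕ) = (k:ℕ) by omega))
        rw [hxk] at h
        have e2 : m + 1 - ((k : ℕ) + 1) = m - (k : ℕ) := by omega
        rw [e2] at h
        omega
    · funext j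
      dsimp only
      rw [hgS, hgS, Sf_split m y (j : ℕ) j.2]
      have : y ⟨(j : ℕ), j.2⟩ = y j := congrArg y (Fin.ext rfl)
      omega
  · -- right_inv
    intro t
    apply Subtype.ext
    funext k
    dsimp only
    rw [Sf_of_g m (Gg_mono m c t) (k : ℕ) (by omega), Gg_high m t.1 (le_refl m),
      Nat.sub_zero]
    unfold Gg
    rw [dif_pos k.2]

lemma main_count (m i : ℕ) (hi : i ≤ m) :
    (m + 1) * Nat.card {p : (Fin (m + 1) → ℕ) × (Fin m → ℕ) //
      (p.1 ⟨0, by omega⟩ + ∑ j, p.2 j = m - i) ∧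
      (∀ d : ℕ, ∀ _h1 : 2 ≤ d, ∀ _h2 : d ≤ m + 1,
        p.1 ⟨d - 1, by omega⟩ +
          ∑ j ∈ Finset.univ.filter (fun j : Fin m => d ≤ (j : ℕ) + 2), p.2 j
        = m + 1 - d)} =
    (i + 1) * Nat.choose (2 * m - i) m := by
  rw [card_eq m (m - i), cardT, Akey m (m - i) (by omega),
    show m + (m - i) = 2 * m - i from by omega,
    show m + 1 - (m - i) = i + 1 from by omega]

theorem stmt8 (n i : ℕ) (hn : 2 ≤ n) (hi : i ≤ n - 2) :
    (n - 1) * Nat.card {p : (Fin (n - 1) → ℕ) × (Fin (n - 2) → ℕ) //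
      (p.1 ⟨0, by omega⟩ + ∑ j, p.2 j = n - 2 - i) ∧
      (∀ d : ℕ, ∀ _h1 : 2 ≤ d, ∀ _h2 : d ≤ n - 1,
        p.1 ⟨d - 1, by omega⟩ +
          ∑ j ∈ Finset.univ.filter (fun j : Fin (n - 2) => d ≤ (j : ℕ) + 2), p.2 j
        = n - 1 - d)} =
    (i + 1) * Nat.choose (2 * n - 4 - i) (n - 2) := by
  obtain ⟨m, rfl⟩ : ∃ m, n = m + 2 := ⟨n - 2, by omega⟩
  exact main_count m i (by omega)
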